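/- Adjoint-based gradient formula for the reduced inverse objective: fix θ ∈ ℝᵖ and suppose (ψ, η) ∈ ℝⁿ × ℝ^q satisfies (∂F/∂z)(z*(θ),θ)ᵀ ψ + Aᵀ η = −β Wᵀ (W z*(θ) − zᵒ) and A ψ = 0. Then the reduced objective 𝒥 is differentiable at θ and ∇𝒥(θ) = (∂F/∂θ)(z*(θ),θ)ᵀ ψ + γ Gᵀ (G θ − θᵒ) + α RᵀR θ. -/

import Mathlib

open scoped BigOperators
open Matrix ContinuousLinearMap

lemma clm_apply_eq_sum {n' : ℕ} (T : (Fin n' → ℝ) →L[ℝ] ℝ) (w : Fin n' → ℝ) :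
    T w = ∑ j : Fin n', w j * T (Pi.single j 1) := by
  have hw : w = ∑ j : Fin n', w j • (Pi.single j 1 : Fin n' → ℝ) := by
    funext k
    simp [Finset.sum_apply, Pi.single_apply]
  conv_lhs => rw [hw]
  rw [map_sum]
  simp [smul_eq_mul]

lemma row_hasFDerivAt {p' n' m' : ℕ} (M : Matrix (Fin m') (Fin n') ℝ) (d : Fin m' → ℝ)
    {g : (Fin p' → ℝ) → (Fin n' → ℝ)} {θ : Fin p' → ℝ}
    {D : (Fin p' → ℝ) →L[ℝ] (Fin n' → ℝ)} (hg : HasFDerivAt g D θ) (i : Fin m') :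
    HasFDerivAt (fun ϑ => (M.mulVec (g ϑ) - d) i)
      (∑ j : Fin n', M i j • ((ContinuousLinearMap.proj j).comp D)) θ := by
  have h : HasFDerivAt (fun ϑ => (∑ j : Fin n', M i j * g ϑ j) - d i)
      (∑ j : Fin n', M i j • ((ContinuousLinearMap.proj j).comp D)) θ := by
    apply HasFDerivAt.sub_const
    apply HasFDerivAt.fun_sum
    intro j _
    exact ((ContinuousLinearMap.proj j).hasFDerivAt.comp θ hg).const_mul (M i j)
  exact h

lemma quad_hasFDerivAt {p' n' m' : ℕ} (M : Matrix (Fin m') (Fin n') ℝ) (d : Fin m' → ℝ)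
    {g : (Fin p' → ℝ) → (Fin n' → ℝ)} {θ : Fin p' → ℝ}
    {D : (Fin p' → ℝ) →L[ℝ] (Fin n' → ℝ)} (hg : HasFDerivAt g D θ) (c : ℝ) :
    HasFDerivAt (fun ϑ => c * ∑ i : Fin m', ((M.mulVec (g ϑ) - d) i) ^ 2)
      (c • ∑ i : Fin m', (2 * ((M.mulVec (g θ) - d) i)) •
          (∑ j : Fin n', M i j • ((ContinuousLinearMap.proj j).comp D))) θ := by
  have h : HasFDerivAt (fun ϑ => ∑ i : Fin m', ((M.mulVec (g ϑ) - d) i) ^ 2)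
      (∑ i : Fin m', (2 * ((M.mulVec (g θ) - d) i)) •
          (∑ j : Fin n', M i j • ((ContinuousLinearMap.proj j).comp D))) θ := by
    apply HasFDerivAt.fun_sum
    intro i _
    have hr := row_hasFDerivAt M d hg i
    have := hr.mul hr
    have h2 : HasFDerivAt (fun ϑ => ((M.mulVec (g ϑ) - d) i) ^ 2)
        ((M.mulVec (g θ) - d) i • (∑ j : Fin n', M i j • ((ContinuousLinearMap.proj j).comp D))
          + (M.mulVec (g θ) - d) i • (∑ j : Fin n', M i j • ((ContinuousLinearMap.proj j).comp D))) θ := by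
      rw [show (fun ϑ => ((M.mulVec (g ϑ) - d) i) ^ 2)
          = (fun ϑ => (M.mulVec (g ϑ) - d) i) * (fun ϑ => (M.mulVec (g ϑ) - d) i) from by
            funext ϑ; simp [pow_two]]
      exact this
    rw [two_mul, add_smul]
    exact h2
  exact h.const_mul c


/-- The reduced inverse objective
`𝒥(ϑ) = (α/2)‖R ϑ‖² + (β/2)‖W z*(ϑ) − zᵒ‖² + (γ/2)‖G ϑ − θᵒ‖²`. -/
noncomputable def redObj (n pdim m r : ℕ)
    (W : Matrix (Fin m) (Fin n) ℝ) (G : Matrix (Fin r) (Fin pdim) ℝ)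
    (R : Matrix (Fin pdim) (Fin pdim) ℝ)
    (zobs : Fin m → ℝ) (tobs : Fin r → ℝ)
    (α β γ : ℝ) (zstar : (Fin pdim → ℝ) → (Fin n → ℝ))
    (ϑ : Fin pdim → ℝ) : ℝ :=
  α / 2 * ∑ i : Fin pdim, (R.mulVec ϑ i) ^ 2
    + β / 2 * ∑ i : Fin m, ((W.mulVec (zstar ϑ) - zobs) i) ^ 2
    + γ / 2 * ∑ i : Fin r, ((G.mulVec ϑ - tobs) i) ^ 2

/-- adjoint-based gradient formula for the reduced inverse objective. -/
theorem adjoint_gradient_formula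
    (n pdim q m r : ℕ) (hn : 1 ≤ n) (hp : 1 ≤ pdim)
    (F : (Fin n → ℝ) → (Fin pdim → ℝ) → (Fin n → ℝ))
    (hF : Differentiable ℝ (fun zt : (Fin n → ℝ) × (Fin pdim → ℝ) => F zt.1 zt.2))
    (A : Matrix (Fin q) (Fin n) ℝ) (b : Fin q → ℝ)
    (W : Matrix (Fin m) (Fin n) ℝ) (G : Matrix (Fin r) (Fin pdim) ℝ)
    (R : Matrix (Fin pdim) (Fin pdim) ℝ)
    (zobs : Fin m → ℝ) (tobs : Fin r → ℝ)
    (α β γ : ℝ) (hα : 0 ≤ α) (hβ : 0 < β) (hγ : 0 < γ)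
    (zstar : (Fin pdim → ℝ) → (Fin n → ℝ)) (hzstar : Differentiable ℝ zstar)
    (heq : ∀ ϑ, F (zstar ϑ) ϑ = 0)
    (hlin : ∀ ϑ, A.mulVec (zstar ϑ) = b)
    (θ : Fin pdim → ℝ) (ψ : Fin n → ℝ) (η : Fin q → ℝ)
    (hadj1 : ∀ k : Fin n,
      (∑ i : Fin n, fderiv ℝ (fun z => F z θ i) (zstar θ) (Pi.single k 1) * ψ i)
        + (∑ i : Fin q, A i k * η i)
        = -(β * ∑ i : Fin m, W i k * ((W.mulVec (zstar θ) - zobs) i)))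
    (hadj2 : A.mulVec ψ = 0) :
    DifferentiableAt ℝ (redObj n pdim m r W G R zobs tobs α β γ zstar) θ ∧
    ∀ v : Fin pdim → ℝ,
      fderiv ℝ (redObj n pdim m r W G R zobs tobs α β γ zstar) θ v
        = ∑ k : Fin pdim,
            ((∑ i : Fin n, fderiv ℝ (fun t => F (zstar θ) t i) θ (Pi.single k 1) * ψ i)
              + γ * ∑ i : Fin r, G i k * ((G.mulVec θ - tobs) i)
              + α * ((R.transpose * R).mulVec θ) k) * v k := by
    classical
  set D := fderiv ℝ zstar θ with hDdef
  have hzD : HasFDerivAt zstar D θ := (hzstar θ).hasFDerivAt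
  have hId : HasFDerivAt (fun ϑ : Fin pdim → ℝ => ϑ)
      (ContinuousLinearMap.id ℝ (Fin pdim → ℝ)) θ := hasFDerivAt_id θ
  have h1 := quad_hasFDerivAt R (0 : Fin pdim → ℝ) hId (α/2)
  have h2 := quad_hasFDerivAt W zobs hzD (β/2)
  have h3 := quad_hasFDerivAt G tobs hId (γ/2)
  have hsum := (h1.add h2).add h3
  have hJ : HasFDerivAt (redObj n pdim m r W G R zobs tobs α β γ zstar)
      ((((α/2) • ∑ i : Fin pdim, (2 * ((R.mulVec θ - 0) i)) •
          (∑ j : Fin pdim, R i j • ((ContinuousLinearMap.proj j).comp (ContinuousLinearMap.id ℝ (Fin pdim → ℝ)))))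
        + ((β/2) • ∑ i : Fin m, (2 * ((W.mulVec (zstar θ) - zobs) i)) •
          (∑ j : Fin n, W i j • ((ContinuousLinearMap.proj j).comp D))))
        + ((γ/2) • ∑ i : Fin r, (2 * ((G.mulVec θ - tobs) i)) •
          (∑ j : Fin pdim, G i j • ((ContinuousLinearMap.proj j).comp (ContinuousLinearMap.id ℝ (Fin pdim → ℝ)))))) θ := by
    have hfun : (fun ϑ : Fin pdim → ℝ =>
        (α/2 * ∑ i : Fin pdim, ((R.mulVec ϑ - 0) i) ^ 2
          + β/2 * ∑ i : Fin m, ((W.mulVec (zstar ϑ) - zobs) i) ^ 2)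
          + γ/2 * ∑ i : Fin r, ((G.mulVec ϑ - tobs) i) ^ 2)
        = redObj n pdim m r W G R zobs tobs α β γ zstar := by
      funext ϑ
      simp [redObj]
    rw [← hfun]
    exact hsum
  refine ⟨hJ.differentiableAt, ?_⟩
  intro v
  rw [hJ.fderiv]
  simp only [ContinuousLinearMap.add_apply, ContinuousLinearMap.coe_smul',
    Pi.smul_apply, ContinuousLinearMap.coe_sum', Finset.sum_apply,
    ContinuousLinearMap.coe_comp', Function.comp_apply,
    ContinuousLinearMap.proj_apply, ContinuousLinearMap.coe_id', id_eq,
    smul_eq_mul, sub_zero]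
  -- Term 1 (R-term)
  have key1 : ∀ k : Fin pdim, ((R.transpose * R).mulVec θ) k = ∑ i : Fin pdim, R i k * (R.mulVec θ) i := by
    intro k
    rw [← Matrix.mulVec_mulVec]
    simp [Matrix.mulVec, dotProduct, Matrix.transpose_apply]
  have e1 : α / 2 * ∑ x : Fin pdim, 2 * (R.mulVec θ) x * ∑ j : Fin pdim, R x j * v j
      = ∑ k : Fin pdim, (α * ((R.transpose * R).mulVec θ) k) * v k := by
    simp_rw [key1, Finset.mul_sum, Finset.sum_mul]
    rw [Finset.sum_comm]
    exact Finset.sum_congr rfl fun j _ => Finset.sum_congr rfl fun x _ => by ring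
  have e3 : γ / 2 * ∑ x : Fin r, 2 * (G.mulVec θ - tobs) x * ∑ j : Fin pdim, G x j * v j
      = ∑ k : Fin pdim, (γ * ∑ i : Fin r, G i k * ((G.mulVec θ - tobs) i)) * v k := by
    simp_rw [Finset.mul_sum, Finset.sum_mul]
    rw [Finset.sum_comm]
    exact Finset.sum_congr rfl fun j _ => Finset.sum_congr rfl fun x _ => by ring
  -- partial derivative machinery
  set DF : Fin n → ((Fin n → ℝ) × (Fin pdim → ℝ)) →L[ℝ] ℝ :=
    fun i => fderiv ℝ (fun zt : (Fin n → ℝ) × (Fin pdim → ℝ) => F zt.1 zt.2 i) (zstar θ, θ) with hDF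
  have hFi : ∀ i : Fin n, HasFDerivAt
      (fun zt : (Fin n → ℝ) × (Fin pdim → ℝ) => F zt.1 zt.2 i) (DF i) (zstar θ, θ) := by
    intro i
    exact ((differentiable_pi.mp hF i) (zstar θ, θ)).hasFDerivAt
  have hpz : ∀ i : Fin n, fderiv ℝ (fun z => F z θ i) (zstar θ)
      = (DF i).comp (ContinuousLinearMap.inl ℝ (Fin n → ℝ) (Fin pdim → ℝ)) := by
    intro i
    exact ((hFi i).comp (f := fun z => (z, θ)) (zstar θ) (hasFDerivAt_prodMk_left (zstar θ) θ)).fderiv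
  have hpt : ∀ i : Fin n, fderiv ℝ (fun t => F (zstar θ) t i) θ
      = (DF i).comp (ContinuousLinearMap.inr ℝ (Fin n → ℝ) (Fin pdim → ℝ)) := by
    intro i
    exact ((hFi i).comp (f := fun t => (zstar θ, t)) θ (hasFDerivAt_prodMk_right (zstar θ) θ)).fderiv
  have hzero : ∀ i : Fin n, (DF i) (D v, v) = 0 := by
    intro i
    have hpair : HasFDerivAt (fun ϑ : Fin pdim → ℝ => (zstar ϑ, ϑ))
        (D.prod (ContinuousLinearMap.id ℝ (Fin pdim → ℝ))) θ := hzD.prodMk (hasFDerivAt_id θ)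
    have hchain := HasFDerivAt.comp (f := fun ϑ : Fin pdim → ℝ => (zstar ϑ, ϑ)) θ (hFi i) hpair
    have hconst : HasFDerivAt (fun ϑ => F (zstar ϑ) ϑ i)
        (0 : (Fin pdim → ℝ) →L[ℝ] ℝ) θ := by
      have hfun : (fun ϑ => F (zstar ϑ) ϑ i) = fun _ => (0:ℝ) := by
        funext ϑ
        rw [heq ϑ]
        rfl
      rw [hfun]
      exact hasFDerivAt_const 0 θ
    have h0 := hchain.unique hconst
    have h1 := congrArg (fun T : (Fin pdim → ℝ) →L[ℝ] ℝ => T v) h0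
    simpa using h1
  have hsplit : ∀ i : Fin n, (DF i) (D v, (0 : Fin pdim → ℝ)) = -((DF i) (0, v)) := by
    intro i
    have hadd : (DF i) (D v, v) = (DF i) (D v, (0 : Fin pdim → ℝ)) + (DF i) (0, v) := by
      rw [← map_add]
      congr 1
      simp
    have := hzero i
    rw [hadd] at this
    linarith
  have hArow : ∀ i : Fin q, ∑ j : Fin n, A i j * D v j = 0 := by
    intro i
    have hc : HasFDerivAt (fun ϑ => (A.mulVec (zstar ϑ) - 0) i)
        (0 : (Fin pdim → ℝ) →L[ℝ] ℝ) θ := by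
      have hfun : (fun ϑ => (A.mulVec (zstar ϑ) - 0) i) = fun _ => b i := by
        funext ϑ
        rw [hlin ϑ]
        simp
      rw [hfun]
      exact hasFDerivAt_const _ θ
    have h0 := (row_hasFDerivAt A 0 hzD i).unique hc
    have h1 := congrArg (fun T : (Fin pdim → ℝ) →L[ℝ] ℝ => T v) h0
    simpa using h1
  have e2 : β / 2 * ∑ x : Fin m, 2 * (W.mulVec (zstar θ) - zobs) x * ∑ j : Fin n, W x j * D v j
      = ∑ k : Fin pdim,
          (∑ i : Fin n, (fderiv ℝ (fun t => F (zstar θ) t i) θ) (Pi.single k 1) * ψ i) * v k := by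
    have hP : ∑ j : Fin n, D v j * ∑ i : Fin q, A i j * η i = 0 := by
      calc ∑ j : Fin n, D v j * ∑ i : Fin q, A i j * η i
          = ∑ i : Fin q, η i * ∑ j : Fin n, A i j * D v j := by
            simp_rw [Finset.mul_sum]
            rw [Finset.sum_comm]
            exact Finset.sum_congr rfl fun i _ => Finset.sum_congr rfl fun j _ => by ring
        _ = 0 := by
            simp [hArow]
    calc β / 2 * ∑ x : Fin m, 2 * (W.mulVec (zstar θ) - zobs) x * ∑ j : Fin n, W x j * D v j
        = ∑ j : Fin n, D v j * (β * ∑ x : Fin m, W x j * ((W.mulVec (zstar θ) - zobs) x)) := by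
          simp_rw [Finset.mul_sum]
          rw [Finset.sum_comm]
          exact Finset.sum_congr rfl fun j _ => Finset.sum_congr rfl fun x _ => by ring
      _ = ∑ j : Fin n, D v j *
            (-((∑ i : Fin n, (fderiv ℝ (fun z => F z θ i) (zstar θ)) (Pi.single j 1) * ψ i)
              + ∑ i : Fin q, A i j * η i)) := by
          refine Finset.sum_congr rfl fun j _ => ?_
          rw [hadj1 j, neg_neg]
      _ = -(∑ j : Fin n, D v j *
            (∑ i : Fin n, (fderiv ℝ (fun z => F z θ i) (zstar θ)) (Pi.single j 1) * ψ i))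
          - ∑ j : Fin n, D v j * ∑ i : Fin q, A i j * η i := by
          simp_rw [mul_neg, mul_add, neg_add]
          rw [Finset.sum_add_distrib]
          simp [sub_eq_add_neg, Finset.sum_neg_distrib]
      _ = -(∑ j : Fin n, D v j *
            (∑ i : Fin n, (DF i) (Pi.single j 1, 0) * ψ i)) := by
          rw [hP, sub_zero]
          congr 1
          refine Finset.sum_congr rfl fun j _ => ?_
          congr 1
          refine Finset.sum_congr rfl fun i _ => ?_
          rw [hpz i]
          simp
      _ = -(∑ i : Fin n, ψ i * (DF i) (D v, (0 : Fin pdim → ℝ))) := by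
          congr 1
          simp_rw [Finset.mul_sum]
          rw [Finset.sum_comm]
          refine Finset.sum_congr rfl fun i _ => ?_
          have hT := clm_apply_eq_sum
            ((DF i).comp (ContinuousLinearMap.inl ℝ (Fin n → ℝ) (Fin pdim → ℝ))) (D v)
          simp only [ContinuousLinearMap.comp_apply, ContinuousLinearMap.inl_apply] at hT
          rw [hT, Finset.mul_sum]
          exact Finset.sum_congr rfl fun j _ => by ring
      _ = ∑ i : Fin n, ψ i * (DF i) (0, v) := by
          simp_rw [hsplit]
          simp
      _ = ∑ i : Fin n, ψ i * ∑ k : Fin pdim, v k * (fderiv ℝ (fun t => F (zstar θ) t i) θ) (Pi.single k 1) := by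
          refine Finset.sum_congr rfl fun i _ => ?_
          congr 1
          have hT := clm_apply_eq_sum
            ((DF i).comp (ContinuousLinearMap.inr ℝ (Fin n → ℝ) (Fin pdim → ℝ))) v
          simp only [ContinuousLinearMap.comp_apply, ContinuousLinearMap.inr_apply] at hT
          rw [hT]
          refine Finset.sum_congr rfl fun k _ => ?_
          rw [hpt i]
          simp
      _ = ∑ k : Fin pdim,
            (∑ i : Fin n, (fderiv ℝ (fun t => F (zstar θ) t i) θ) (Pi.single k 1) * ψ i) * v k := by
          simp_rw [Finset.mul_sum, Finset.sum_mul]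
          rw [Finset.sum_comm]
          exact Finset.sum_congr rfl fun k _ => Finset.sum_congr rfl fun i _ => by ring
  rw [e1, e2, e3, ← Finset.sum_add_distrib, ← Finset.sum_add_distrib]
  exact Finset.sum_congr rfl fun k _ => by ring
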